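/- Let w ∈ ℝ^d have strictly positive entries, x₀ ∈ ℝ^d be nonzero with support T, τ > 0, and g ∈ ℝ^d be arbitrary. Then the squared Euclidean distance from g to the dilated subdifferential τ·∂‖·‖_{1,w}(x₀) equals Σ_{j∈T} (g(j) − sgn(x₀(j)) w_j τ)² + Σ_{j∉T} pos(|g(j)| − w_j τ)², where pos(x) = max(x,0). -/

import Mathlib

open MeasureTheory ProbabilityTheory
open scoped Pointwise BigOperators

noncomputable section

/-- The weighted ℓ1-norm `‖x‖_{1,w} = ∑ i, w i * |x i|`. -/
def wnorm {d : ℕ} (w : Fin d → ℝ) (x : EuclideanSpace ℝ (Fin d)) : ℝ :=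
  ∑ j, w j * |x j|

/-- The subdifferential of a convex function `f` at `x₀`: the set of `p` with
`f (x₀ + v) ≥ f x₀ + ⟨p, v⟩` for all `v`. -/
def subdiff {d : ℕ} (f : EuclideanSpace ℝ (Fin d) → ℝ) (x₀ : EuclideanSpace ℝ (Fin d)) :
    Set (EuclideanSpace ℝ (Fin d)) :=
  {p | ∀ v, f x₀ + @inner ℝ _ _ p v ≤ f (x₀ + v)}

lemma rsign_mul_self (x : ℝ) (h : x ≠ 0) : Real.sign x * x = |x| := by
  rcases h.lt_or_gt with h|h <;>
    simp [Real.sign_of_neg, Real.sign_of_pos, h, abs_of_pos, abs_of_neg]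

lemma mem_subdiff_iff {d : ℕ} (w : Fin d → ℝ) (hw : ∀ i, 0 < w i)
    (x₀ p : EuclideanSpace ℝ (Fin d)) :
    p ∈ subdiff (wnorm w) x₀ ↔
      ∀ j, (x₀ j ≠ 0 → p j = Real.sign (x₀ j) * w j) ∧ (x₀ j = 0 → |p j| ≤ w j) := by
  constructor
  · intro hp j
    have key : ∀ t : ℝ, p j * t ≤ w j * (|x₀ j + t| - |x₀ j|) := by
      intro t
      have H := hp (EuclideanSpace.single j t)
      have hin : (inner ℝ p (EuclideanSpace.single j t) : ℝ) = p j * t := by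
        simp [PiLp.inner_apply, EuclideanSpace.single_apply, mul_comm]
      have hsum : wnorm w (x₀ + EuclideanSpace.single j t) - wnorm w x₀
          = w j * (|x₀ j + t| - |x₀ j|) := by
        rw [wnorm, wnorm, ← Finset.sum_sub_distrib]
        rw [Finset.sum_eq_single j]
        · simp [EuclideanSpace.single_apply, mul_sub]
        · intro i _ hij
          simp [EuclideanSpace.single_apply, hij]
        · simp
      rw [hin] at H
      linarith
    constructor
    · intro hx
      have h1 := key (x₀ j)
      have h2 := key (-(x₀ j))
      have e1 : |x₀ j + x₀ j| = 2 * |x₀ j| := by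
        rw [← two_mul, abs_mul]; norm_num
      rw [e1] at h1
      simp at h2
      have hpj : p j * x₀ j = w j * |x₀ j| := by
        have := (hw j); nlinarith [abs_nonneg (x₀ j)]
      have hs := rsign_mul_self (x₀ j) hx
      have : p j * x₀ j = Real.sign (x₀ j) * w j * x₀ j := by
        rw [hpj, ← hs]; ring
      exact mul_right_cancel₀ hx this
    · intro hx
      rw [hx] at key
      simp at key
      rw [abs_le]
      constructor
      · have := key (-1); simp at this; linarith
      · have := key 1; simp at this; linarith
  · intro hp v
    have hin : (inner ℝ p v : ℝ) = ∑ j, p j * v j := by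
      simp [PiLp.inner_apply, mul_comm]
    rw [hin, wnorm, wnorm, ← Finset.sum_add_distrib]
    apply Finset.sum_le_sum
    intro j _
    have hvj : (x₀ + v) j = x₀ j + v j := rfl
    rw [hvj]
    by_cases hx : x₀ j = 0
    · rw [hx]
      simp only [abs_zero, mul_zero, zero_add]
      calc p j * v j ≤ |p j * v j| := le_abs_self _
        _ = |p j| * |v j| := abs_mul _ _
        _ ≤ w j * |v j| := by
            apply mul_le_mul_of_nonneg_right ((hp j).2 hx) (abs_nonneg _)
    · rw [(hp j).1 hx]
      have hs := rsign_mul_self (x₀ j) hx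
      have hsle : Real.sign (x₀ j) * (x₀ j + v j) ≤ |x₀ j + v j| := by
        calc Real.sign (x₀ j) * (x₀ j + v j) ≤ |Real.sign (x₀ j) * (x₀ j + v j)| := le_abs_self _
          _ = |Real.sign (x₀ j)| * |x₀ j + v j| := abs_mul _ _
          _ ≤ 1 * |x₀ j + v j| := by
              apply mul_le_mul_of_nonneg_right _ (abs_nonneg _)
              rcases Ne.lt_or_gt hx with h|h <;>
                simp [Real.sign_of_neg, Real.sign_of_pos, h]
          _ = |x₀ j + v j| := one_mul _
      nlinarith [hw j]

lemma clamp_abs_le (c g : ℝ) (hc : 0 ≤ c) : |max (-c) (min c g)| ≤ c := by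
  rw [abs_le]
  constructor
  · exact le_max_left _ _
  · exact max_le (by linarith) (min_le_left _ _)

lemma clamp_sq (c g : ℝ) (hc : 0 ≤ c) :
    (g - max (-c) (min c g)) ^ 2 = max (|g| - c) 0 ^ 2 := by
  rcases le_total g (-c) with h | h
  · rw [min_eq_right (by linarith), max_eq_left h, abs_of_nonpos (by linarith),
      max_eq_left (by linarith)]
    ring
  · rcases le_total g c with h2 | h2
    · rw [min_eq_right h2, max_eq_right h]
      have : |g| ≤ c := abs_le.mpr ⟨h, h2⟩
      rw [max_eq_right (by linarith)]
      ring
    · rw [min_eq_left h2, max_eq_right (by linarith),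
        abs_of_nonneg (by linarith), max_eq_left (by linarith)]

lemma sq_le_of_abs_le' (c g p : ℝ) (hp : |p| ≤ c) :
    max (|g| - c) 0 ^ 2 ≤ (g - p) ^ 2 := by
  have h1 : |g| - c ≤ |g - p| := by
    have := abs_sub_abs_le_abs_sub g p
    linarith
  have h2 : max (|g| - c) 0 ≤ |g - p| := max_le h1 (abs_nonneg _)
  calc max (|g| - c) 0 ^ 2 ≤ |g - p| ^ 2 :=
        pow_le_pow_left₀ (le_max_right _ _) h2 2
    _ = (g - p) ^ 2 := sq_abs _

theorem sq_dist_to_dilated_subdifferential {d : ℕ}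
    (w : Fin d → ℝ) (hw : ∀ i, 0 < w i)
    (x₀ : EuclideanSpace ℝ (Fin d)) (hx₀ : x₀ ≠ 0)
    (τ : ℝ) (hτ : 0 < τ) (g : EuclideanSpace ℝ (Fin d)) :
    Metric.infDist g (τ • subdiff (wnorm w) x₀) ^ 2 =
      ∑ j ∈ Finset.univ.filter (fun j => x₀ j ≠ 0),
          (g j - Real.sign (x₀ j) * w j * τ) ^ 2
        + ∑ j ∈ Finset.univ.filter (fun j => x₀ j = 0),
            max (|g j| - w j * τ) 0 ^ 2 := by
  set S := τ • subdiff (wnorm w) x₀ with hS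
  -- membership characterization of S
  have hmemS : ∀ p : EuclideanSpace ℝ (Fin d), p ∈ S ↔
      ∀ j, (x₀ j ≠ 0 → p j = Real.sign (x₀ j) * w j * τ) ∧ (x₀ j = 0 → |p j| ≤ w j * τ) := by
    intro p
    rw [hS, Set.mem_smul_set]
    constructor
    · rintro ⟨q, hq, rfl⟩ j
      rw [mem_subdiff_iff w hw] at hq
      have hql : (τ • q) j = τ * q j := rfl
      constructor
      · intro hx; rw [hql, (hq j).1 hx]; ring
      · intro hx
        rw [hql, abs_mul, abs_of_pos hτ, mul_comm (w j) τ]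
        exact mul_le_mul_of_nonneg_left ((hq j).2 hx) hτ.le
    · intro hp
      refine ⟨τ⁻¹ • p, ?_, ?_⟩
      · rw [mem_subdiff_iff w hw]
        intro j
        have hql : (τ⁻¹ • p) j = τ⁻¹ * p j := rfl
        constructor
        · intro hx
          rw [hql, (hp j).1 hx]
          field_simp
        · intro hx
          rw [hql, abs_mul, abs_of_pos (inv_pos.mpr hτ)]
          have := (hp j).2 hx
          rw [inv_mul_le_iff₀ hτ]
          linarith [this]
      · rw [smul_smul, mul_inv_cancel₀ hτ.ne', one_smul]
  -- the projection point
  set q : EuclideanSpace ℝ (Fin d) := WithLp.toLp 2 (fun j =>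
    if x₀ j ≠ 0 then Real.sign (x₀ j) * w j * τ
    else max (-(w j * τ)) (min (w j * τ) (g j))) with hq
  have hcpos : ∀ j, 0 ≤ w j * τ := fun j => (mul_pos (hw j) hτ).le
  have hqS : q ∈ S := by
    rw [hmemS]
    intro j
    constructor
    · intro hx; simp [hq, hx]
    · intro hx
      have : q j = max (-(w j * τ)) (min (w j * τ) (g j)) := by simp [hq, hx]
      rw [this]
      exact clamp_abs_le _ _ (hcpos j)
  have hdist : ∀ p : EuclideanSpace ℝ (Fin d),
      dist g p = Real.sqrt (∑ j, (g j - p j) ^ 2) := by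
    intro p
    rw [EuclideanSpace.dist_eq]
    congr 1
    apply Finset.sum_congr rfl
    intro j _
    rw [Real.dist_eq, sq_abs]
  -- value of dist g q squared
  have hval : ∑ j, (g j - q j) ^ 2 =
      ∑ j ∈ Finset.univ.filter (fun j => x₀ j ≠ 0),
          (g j - Real.sign (x₀ j) * w j * τ) ^ 2
        + ∑ j ∈ Finset.univ.filter (fun j => x₀ j = 0),
            max (|g j| - w j * τ) 0 ^ 2 := by
    rw [← Finset.sum_filter_add_sum_filter_not Finset.univ (fun j => x₀ j ≠ 0)]
    congr 1
    · apply Finset.sum_congr rfl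
      intro j hj
      rw [Finset.mem_filter] at hj
      simp [hq, hj.2]
    · have hfe : Finset.univ.filter (fun j => ¬ x₀ j ≠ 0)
          = Finset.univ.filter (fun j => x₀ j = 0) := by
        apply Finset.filter_congr; intro j _; simp
      rw [hfe]
      apply Finset.sum_congr rfl
      intro j hj
      rw [Finset.mem_filter] at hj
      have : q j = max (-(w j * τ)) (min (w j * τ) (g j)) := by simp [hq, hj.2]
      rw [this, clamp_sq _ _ (hcpos j)]
  -- q is the closest point
  have hmin : ∀ p ∈ S, dist g q ≤ dist g p := by
    intro p hp
    rw [hdist, hdist]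
    apply Real.sqrt_le_sqrt
    apply Finset.sum_le_sum
    intro j _
    rw [hmemS] at hp
    by_cases hx : x₀ j = 0
    · have hqj : q j = max (-(w j * τ)) (min (w j * τ) (g j)) := by simp [hq, hx]
      rw [hqj, clamp_sq _ _ (hcpos j)]
      exact sq_le_of_abs_le' _ _ _ ((hp j).2 hx)
    · have hqj : q j = Real.sign (x₀ j) * w j * τ := by simp [hq, hx]
      rw [hqj, ← (hp j).1 hx]
  have hinf : Metric.infDist g S = dist g q := by
    apply le_antisymm (Metric.infDist_le_dist_of_mem hqS)
    by_contra h
    push_neg at h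
    obtain ⟨p, hp, hlt⟩ := (Metric.infDist_lt_iff ⟨q, hqS⟩).mp h
    exact absurd (hmin p hp) (not_le.mpr hlt)
  rw [hinf, hdist, Real.sq_sqrt (Finset.sum_nonneg fun j _ => sq_nonneg _), hval]

end
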